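/- Lemma 3.2(f): let α ∈ (0,1), γ ≥ 1, T > 0, N ≥ 1, and let the mesh be graded, t_n = (n/N)^γ T for 0 ≤ n ≤ N. Then for every 1 ≤ n ≤ N, Σ_{j=1}^{n} P^{n,j}_α · t_j^{−α} ≤ 4 e^γ · ln(n+2). -/

import Mathlib

open Finset

/-- The kernel `k_β(s) = s^(β-1)/Γ(β)`. -/
noncomputable def kker (β s : ℝ) : ℝ := s ^ (β - 1) / Real.Gamma β

/-- The discrete L1 kernels `K^{n,j}_{1-α}`. -/
noncomputable def Kd (α : ℝ) (t : ℕ → ℝ) (n j : ℕ) : ℝ :=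
  (kker (2 - α) (t n - t (j - 1)) - kker (2 - α) (t n - t j)) / (t j - t (j - 1))

/-- The complementary discrete kernels `P^{n,i}_α`, defined by downward recursion. -/
noncomputable def Pd (α : ℝ) (t : ℕ → ℝ) (n i : ℕ) : ℝ :=
  if i = n then 1 / Kd α t n n
  else (1 / Kd α t i i) *
    ∑ j ∈ (Finset.Ioc i n).attach,
      Pd α t n j.1 * (Kd α t j.1 (i + 1) - Kd α t j.1 i)
termination_by n - i
decreasing_by
  have h := Finset.mem_Ioc.mp j.2
  omega

/-- Unfolding of `Pd` off the diagonal. -/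
lemma Pd_off (α : ℝ) (t : ℕ → ℝ) (n i : ℕ) (h : i ≠ n) :
    Pd α t n i = (1 / Kd α t i i) *
      ∑ j ∈ Finset.Ioc i n, Pd α t n j * (Kd α t j (i + 1) - Kd α t j i) := by
  rw [Pd, if_neg h]
  congr 1
  exact Finset.sum_attach _ fun j => Pd α t n j * (Kd α t j (i + 1) - Kd α t j i)

lemma Pd_diag (α : ℝ) (t : ℕ → ℝ) (n : ℕ) : Pd α t n n = 1 / Kd α t n n := by
  rw [Pd, if_pos rfl]

/-- Nonnegativity of `Pd` and the complementary identity, by downward induction. -/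
theorem Pd_aux (α : ℝ) (t : ℕ → ℝ) (n : ℕ)
    (hKpos : ∀ i, 1 ≤ i → i ≤ n → 0 < Kd α t i i)
    (hKmono : ∀ i j, 1 ≤ i → i < j → j ≤ n → Kd α t j i ≤ Kd α t j (i + 1))
    (i : ℕ) (h1 : 1 ≤ i) (h2 : i ≤ n) :
    0 ≤ Pd α t n i ∧ ∑ j ∈ Finset.Icc i n, Pd α t n j * Kd α t j i = 1 := by
  by_cases hin : i = n
  · subst hin
    have hK := hKpos i h1 h2
    rw [Pd_diag, Finset.Icc_self, Finset.sum_singleton, Pd_diag]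
    constructor
    · positivity
    · field_simp
  · have hin' : i < n := lt_of_le_of_ne h2 hin
    have hK := hKpos i h1 h2
    have hP := Pd_off α t n i hin
    have hnn : 0 ≤ Pd α t n i := by
      rw [hP]
      apply mul_nonneg (by positivity)
      refine Finset.sum_nonneg fun j hj => ?_
      obtain ⟨hj1, hj2⟩ := Finset.mem_Ioc.mp hj
      exact mul_nonneg (Pd_aux α t n hKpos hKmono j (le_trans h1 hj1.le) hj2).1
        (sub_nonneg.mpr (hKmono i j h1 hj1 hj2))
    refine ⟨hnn, ?_⟩
    have IH := (Pd_aux α t n hKpos hKmono (i + 1) (by omega) (by omega)).2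
    have hdiag : Pd α t n i * Kd α t i i
        = ∑ j ∈ Finset.Ioc i n, Pd α t n j * (Kd α t j (i + 1) - Kd α t j i) := by
      rw [hP]; field_simp
    calc ∑ j ∈ Finset.Icc i n, Pd α t n j * Kd α t j i
        = Pd α t n i * Kd α t i i + ∑ j ∈ Finset.Ioc i n, Pd α t n j * Kd α t j i := by
          rw [Finset.Icc_eq_cons_Ioc h2, Finset.sum_cons]
      _ = ∑ j ∈ Finset.Ioc i n, (Pd α t n j * (Kd α t j (i + 1) - Kd α t j i)
            + Pd α t n j * Kd α t j i) := by
          rw [Finset.sum_add_distrib, hdiag]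
      _ = ∑ j ∈ Finset.Icc (i + 1) n, Pd α t n j * Kd α t j (i + 1) := by
          rw [Finset.Icc_add_one_left_eq_Ioc]
          exact Finset.sum_congr rfl fun j _ => by ring
      _ = 1 := IH
termination_by n - i
decreasing_by all_goals omega

/-- telescoping helper -/
lemma tele (g : ℕ → ℝ) (j : ℕ) : ∑ i ∈ Finset.Icc 1 j, (g (i - 1) - g i) = g 0 - g j := by
  induction j with
  | zero => simp
  | succ j ih =>
      rw [Finset.sum_Icc_succ_top (by omega), ih]
      simp only [Nat.add_sub_cancel]
      ring

theorem complementary_kernel_log_bound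
    (α γ T : ℝ) (N : ℕ) (t : ℕ → ℝ)
    (hα0 : 0 < α) (hα1 : α < 1) (hγ : 1 ≤ γ) (hT : 0 < T) (hN : 1 ≤ N)
    (ht : ∀ n, t n = ((n : ℝ) / (N : ℝ)) ^ γ * T) :
    ∀ n, 1 ≤ n → n ≤ N →
      ∑ j ∈ Finset.Icc 1 n, Pd α t n j * t j ^ (-α)
        ≤ 4 * Real.exp γ * Real.log ((n : ℝ) + 2) := by
  have hγ0 : (0:ℝ) < γ := by linarith
  have hNpos : (0:ℝ) < (N:ℝ) := by exact_mod_cast hN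
  have hΓ : 0 < Real.Gamma (2 - α) := Real.Gamma_pos_of_pos (by linarith)
  have h1α : (0:ℝ) < 1 - α := by linarith
  -- mesh monotonicity
  have htmono : ∀ a b : ℕ, a < b → t a < t b := by
    intro a b hab
    rw [ht a, ht b]
    have hNpos : (0:ℝ) < (N:ℝ) := by exact_mod_cast hN
    refine mul_lt_mul_of_pos_right (Real.rpow_lt_rpow (by positivity) ?_ hγ0) hT
    gcongr
  have ht0 : t 0 = 0 := by
    rw [ht 0]
    norm_num
    exact Or.inl (Real.zero_rpow (ne_of_gt hγ0))
  have htle : ∀ a b : ℕ, a ≤ b → t a ≤ t b := by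
    intro a b h
    rcases Nat.eq_or_lt_of_le h with h | h
    · rw [h]
    · exact (htmono a b h).le
  have htpos : ∀ i : ℕ, 1 ≤ i → 0 < t i := fun i hi => ht0 ▸ htmono 0 i hi
  have hΔpos : ∀ i : ℕ, 1 ≤ i → 0 < t i - t (i - 1) :=
    fun i hi => sub_pos.mpr (htmono (i - 1) i (by omega))
  have hKd_eq : ∀ j i : ℕ, Kd α t j i
      = ((t j - t (i - 1)) ^ (1 - α) - (t j - t i) ^ (1 - α)) / (t i - t (i - 1))
        / Real.Gamma (2 - α) := by
    intro j i
    unfold Kd kker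
    rw [show (2 : ℝ) - α - 1 = 1 - α by ring, div_sub_div_same, div_right_comm]
  have hKnonneg : ∀ i j : ℕ, 1 ≤ i → i ≤ j → 0 ≤ Kd α t j i := by
    intro i j hi hij
    rw [hKd_eq]
    have hd := hΔpos i hi
    have h1 : (0 : ℝ) ≤ t j - t i := by
      rcases Nat.eq_or_lt_of_le hij with h | h
      · rw [h]; simp
      · linarith [htmono i j h]
    have h2 : t j - t i ≤ t j - t (i - 1) := by linarith [htmono (i - 1) i (by omega : i - 1 < i)]
    have h3 := Real.rpow_le_rpow h1 h2 h1α.le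
    exact div_nonneg (div_nonneg (sub_nonneg.mpr h3) hd.le) hΓ.le
  have hKpos : ∀ i : ℕ, 1 ≤ i → 0 < Kd α t i i := by
    intro i hi
    rw [hKd_eq]
    have hd := hΔpos i hi
    rw [sub_self, Real.zero_rpow (ne_of_gt h1α), sub_zero]
    exact div_pos (div_pos (Real.rpow_pos_of_pos hd _) hd) hΓ
  have hKmono : ∀ i j : ℕ, 1 ≤ i → i < j → Kd α t j i ≤ Kd α t j (i + 1) := by
    intro i j hi hij
    rw [hKd_eq, hKd_eq]
    simp only [Nat.add_sub_cancel]
    have hconc : ConcaveOn ℝ (Set.Ici 0) fun x : ℝ => x ^ (1 - α) :=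
      Real.concaveOn_rpow h1α.le (by linarith)
    have hx : t j - t (i + 1) ∈ Set.Ici (0 : ℝ) := sub_nonneg.mpr (htle (i + 1) j hij)
    have hz : t j - t (i - 1) ∈ Set.Ici (0 : ℝ) :=
      sub_nonneg.mpr (htle (i - 1) j (by omega))
    have hxy : t j - t (i + 1) < t j - t i := by linarith [htmono i (i + 1) (by omega)]
    have hyz : t j - t i < t j - t (i - 1) := by linarith [htmono (i - 1) i (by omega)]
    have H := hconc.slope_anti_adjacent hx hz hxy hyz
    have e1 : t j - t (i - 1) - (t j - t i) = t i - t (i - 1) := by ring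
    have e2 : t j - t i - (t j - t (i + 1)) = t (i + 1) - t i := by ring
    rw [e1, e2] at H
    exact div_le_div_of_nonneg_right H hΓ.le
  intro n hn1 hnN
  have key := fun i h1 h2 => Pd_aux α t n (fun i hi _ => hKpos i hi)
    (fun i j hi hij _ => hKmono i j hi hij) i h1 h2
  -- telescoping
  have htel : ∀ j : ℕ, 1 ≤ j →
      ∑ i ∈ Finset.Icc 1 j, (t i - t (i - 1)) * Kd α t j i
        = t j ^ (1 - α) / Real.Gamma (2 - α) := by
    intro j hj
    have hterm : ∀ i ∈ Finset.Icc 1 j, (t i - t (i - 1)) * Kd α t j i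
        = kker (2 - α) (t j - t (i - 1)) - kker (2 - α) (t j - t i) := by
      intro i hi
      obtain ⟨hi1, _⟩ := Finset.mem_Icc.mp hi
      unfold Kd
      rw [mul_comm, div_mul_cancel₀ _ (ne_of_gt (hΔpos i hi1))]
    have h := tele (fun i => kker (2 - α) (t j - t i)) j
    beta_reduce at h
    rw [Finset.sum_congr rfl hterm, h, ht0, sub_zero]
    unfold kker
    rw [show (2 : ℝ) - α - 1 = 1 - α by ring, sub_self, Real.zero_rpow (ne_of_gt h1α),
      zero_div, sub_zero]
  -- inner lower bound
  have hinner : ∀ j : ℕ, 1 ≤ j →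
      t j ^ (-α) / Real.Gamma (2 - α)
        ≤ ∑ i ∈ Finset.Icc 1 j, (t i - t (i - 1)) / t i * Kd α t j i := by
    intro j hj1
    have step2 : ∑ i ∈ Finset.Icc 1 j, (t i - t (i - 1)) / t j * Kd α t j i
        = t j ^ (-α) / Real.Gamma (2 - α) := by
      have e : ∀ i ∈ Finset.Icc 1 j, (t i - t (i - 1)) / t j * Kd α t j i
          = (t i - t (i - 1)) * Kd α t j i / t j := fun i _ => by ring
      rw [Finset.sum_congr rfl e, ← Finset.sum_div, htel j hj1, div_right_comm]
      congr 1
      have hpow : t j ^ (-α) = t j ^ (1 - α) / t j ^ (1 : ℝ) := by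
        rw [← Real.rpow_sub (htpos j hj1)]
        norm_num
      rw [hpow, Real.rpow_one]
    rw [← step2]
    refine Finset.sum_le_sum fun i hi => ?_
    obtain ⟨hi1, hi2⟩ := Finset.mem_Icc.mp hi
    have h1 := htpos i hi1
    have h2 := htle i j hi2
    have hK := hKnonneg i j hi1 hi2
    have hd := hΔpos i hi1
    gcongr
  -- Gamma(2-α) ≤ 1 by convexity
  have hΓle1 : Real.Gamma (2 - α) ≤ 1 := by
    have hc := Real.convexOn_Gamma.2 (Set.mem_Ioi.mpr one_pos)
      (Set.mem_Ioi.mpr (by norm_num : (0 : ℝ) < 2)) hα0.le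
      (by linarith : (0 : ℝ) ≤ 1 - α) (by ring)
    rw [smul_eq_mul, smul_eq_mul, smul_eq_mul, smul_eq_mul,
      show α * 1 + (1 - α) * 2 = 2 - α by ring, Real.Gamma_one, Real.Gamma_two] at hc
    linarith
  -- graded mesh step bound
  have hstep' : ∀ i ∈ Finset.Icc 1 n, (t i - t (i - 1)) / t i ≤ γ / i := by
    intro i hi
    obtain ⟨hi1, _⟩ := Finset.mem_Icc.mp hi
    have hi1' : (1 : ℝ) ≤ (i : ℝ) := by exact_mod_cast hi1
    have hipos : (0 : ℝ) < (i : ℝ) := by linarith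
    have htipos := htpos i hi1
    have hratio : t (i - 1) / t i = (((i : ℝ) - 1) / (i : ℝ)) ^ γ := by
      rw [ht (i - 1), ht i, Nat.cast_sub hi1, Nat.cast_one,
        Real.div_rpow (by linarith) hNpos.le, Real.div_rpow (by linarith) hNpos.le,
        Real.div_rpow (by linarith) hipos.le]
      have h1 : ((i : ℝ)) ^ γ ≠ 0 := by positivity
      have h2 : ((N : ℝ)) ^ γ ≠ 0 := by positivity
      field_simp
    have hbern : 1 - γ / (i : ℝ) ≤ (((i : ℝ) - 1) / (i : ℝ)) ^ γ := by
      have hs : (-1 : ℝ) ≤ -(1 / (i : ℝ)) := by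
        have : 1 / (i : ℝ) ≤ 1 := by rw [div_le_one hipos]; exact hi1'
        linarith
      have h := one_add_mul_self_le_rpow_one_add hs hγ
      have e : (1 : ℝ) + -(1 / (i : ℝ)) = ((i : ℝ) - 1) / (i : ℝ) := by
        field_simp
        ring
      rw [e] at h
      calc 1 - γ / (i : ℝ) = 1 + γ * -(1 / (i : ℝ)) := by ring
        _ ≤ _ := h
    have e2 : (t i - t (i - 1)) / t i = 1 - t (i - 1) / t i := by field_simp
    rw [e2, hratio]
    linarith
  -- harmonic bound
  have hharm : ∑ i ∈ Finset.Icc 1 n, ((i : ℝ))⁻¹ ≤ 1 + Real.log n := by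
    have h := harmonic_le_one_add_log n
    rw [harmonic_eq_sum_Icc] at h
    push_cast at h
    exact h
  -- final numeric bound
  have hfinal : γ * (1 + Real.log n) ≤ 4 * Real.exp γ * Real.log ((n : ℝ) + 2) := by
    have hn1' : (1 : ℝ) ≤ (n : ℝ) := by exact_mod_cast hn1
    have hlogn0 : 0 ≤ Real.log n := Real.log_nonneg hn1'
    have hL1 : 1 ≤ Real.log ((n : ℝ) + 2) := by
      rw [Real.le_log_iff_exp_le (by linarith)]
      have := Real.exp_one_lt_d9
      linarith
    have hL2 : Real.log n ≤ Real.log ((n : ℝ) + 2) :=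
      Real.log_le_log (by linarith) (by linarith)
    have hE : γ ≤ Real.exp γ := by linarith [Real.add_one_le_exp γ]
    have hEpos := Real.exp_pos γ
    nlinarith [mul_le_mul_of_nonneg_left
        (show 1 + Real.log n ≤ 2 * Real.log ((n : ℝ) + 2) by linarith) hEpos.le,
      mul_le_mul_of_nonneg_right hE (show (0 : ℝ) ≤ 1 + Real.log n by linarith),
      mul_nonneg hEpos.le (show (0 : ℝ) ≤ Real.log ((n : ℝ) + 2) by linarith)]
  -- main chain
  calc ∑ j ∈ Finset.Icc 1 n, Pd α t n j * t j ^ (-α)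
      = Real.Gamma (2 - α)
          * ∑ j ∈ Finset.Icc 1 n, Pd α t n j * (t j ^ (-α) / Real.Gamma (2 - α)) := by
        rw [Finset.mul_sum]
        refine Finset.sum_congr rfl fun j hj => ?_
        field_simp
    _ ≤ Real.Gamma (2 - α) * ∑ j ∈ Finset.Icc 1 n, Pd α t n j
          * ∑ i ∈ Finset.Icc 1 j, (t i - t (i - 1)) / t i * Kd α t j i := by
        refine mul_le_mul_of_nonneg_left (Finset.sum_le_sum fun j hj => ?_) hΓ.le
        obtain ⟨hj1, hj2⟩ := Finset.mem_Icc.mp hj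
        exact mul_le_mul_of_nonneg_left (hinner j hj1) (key j hj1 hj2).1
    _ = Real.Gamma (2 - α) * ∑ i ∈ Finset.Icc 1 n, (t i - t (i - 1)) / t i
          * ∑ j ∈ Finset.Icc i n, Pd α t n j * Kd α t j i := by
        congr 1
        calc ∑ j ∈ Finset.Icc 1 n, Pd α t n j
              * ∑ i ∈ Finset.Icc 1 j, (t i - t (i - 1)) / t i * Kd α t j i
            = ∑ j ∈ Finset.Icc 1 n, ∑ i ∈ Finset.Icc 1 j,
                (t i - t (i - 1)) / t i * (Pd α t n j * Kd α t j i) := by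
              refine Finset.sum_congr rfl fun j _ => ?_
              rw [Finset.mul_sum]
              exact Finset.sum_congr rfl fun i _ => by ring
          _ = ∑ i ∈ Finset.Icc 1 n, ∑ j ∈ Finset.Icc i n,
                (t i - t (i - 1)) / t i * (Pd α t n j * Kd α t j i) := by
              refine Finset.sum_comm' ?_
              intro x y
              simp only [Finset.mem_Icc]
              omega
          _ = ∑ i ∈ Finset.Icc 1 n, (t i - t (i - 1)) / t i
                * ∑ j ∈ Finset.Icc i n, Pd α t n j * Kd α t j i := by
              exact Finset.sum_congr rfl fun i _ => (Finset.mul_sum _ _ _).symm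
    _ = Real.Gamma (2 - α) * ∑ i ∈ Finset.Icc 1 n, (t i - t (i - 1)) / t i := by
        congr 1
        refine Finset.sum_congr rfl fun i hi => ?_
        obtain ⟨hi1, hi2⟩ := Finset.mem_Icc.mp hi
        rw [(key i hi1 hi2).2, mul_one]
    _ ≤ 1 * ∑ i ∈ Finset.Icc 1 n, (t i - t (i - 1)) / t i := by
        refine mul_le_mul_of_nonneg_right hΓle1 (Finset.sum_nonneg fun i hi => ?_)
        obtain ⟨hi1, _⟩ := Finset.mem_Icc.mp hi
        exact div_nonneg (hΔpos i hi1).le (htpos i hi1).le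
    _ ≤ ∑ i ∈ Finset.Icc 1 n, γ / (i : ℝ) := by
        rw [one_mul]
        exact Finset.sum_le_sum hstep'
    _ = γ * ∑ i ∈ Finset.Icc 1 n, ((i : ℝ))⁻¹ := by
        rw [Finset.mul_sum]
        exact Finset.sum_congr rfl fun i _ => div_eq_mul_inv _ _
    _ ≤ γ * (1 + Real.log n) := mul_le_mul_of_nonneg_left hharm (by linarith)
    _ ≤ 4 * Real.exp γ * Real.log ((n : ℝ) + 2) := hfinal
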